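/- Let S_λ be a bounded left-invertible weighted shift on a rootless, leafless directed tree, and let {v_m}_{m∈ℤ} be a bilateral path. Define g_m = Σ_{n≥0} Σ_{u∈A(v_m,n)} (λ^{(n)}(u)/λ^{(n)}(v_m)) e_u when α_λ(v_m) < ∞, and g_m = 0 otherwise. Then each g_m lies in ℓ²(V), the hyper-range ∩_{n≥0} S_λ^n(ℓ²(V)) is the orthogonal direct sum of the one-dimensional (or zero) spans of the g_m (m ∈ ℤ), and S_λ g_m = λ_{v_{m+1}} g_{m+1} for all m ∈ ℤ. -/

import Mathlib

/-- A countably infinite, leafless, rootless directed tree, encoded by its parent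
function: every vertex has a child (leafless), there are no circuits, and the tree
is connected (any two vertices have a common ancestor). -/
structure RootlessTree (V : Type*) where
  par : V → V
  leafless : ∀ u : V, ∃ w : V, par w = u
  acyclic : ∀ (u : V) (n : ℕ), 0 < n → par^[n] u ≠ u
  connected : ∀ u w : V, ∃ k l : ℕ, par^[k] u = par^[l] w

/-- `Aset T v n` is the set `A(v,n)`: `A(v,0) = {v}` and
`A(v,n) = Chi^n(par^n(v)) \ Chi^{n-1}(par^{n-1}(v))` for `n ≥ 1`. -/
def Aset {V : Type*} (T : RootlessTree V) (v : V) : ℕ → Set V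
  | 0 => {v}
  | n + 1 => {w | T.par^[n + 1] w = T.par^[n + 1] v ∧ ¬ T.par^[n] w = T.par^[n] v}

open scoped ENNReal

/-- `lamN T wt n u` is `λ⁽ⁿ⁾(u) = λ_u · λ_{par u} ⋯ λ_{parⁿ⁻¹ u}`. -/
def lamN {V : Type*} (T : RootlessTree V) (wt : V → ℝ) (n : ℕ) (u : V) : ℝ :=
  ∏ j ∈ Finset.range n, wt (T.par^[j] u)

/-- `alphaFun T wt v = α_λ(v) = Σ_{n≥0} Σ_{u ∈ A(v,n)} (λ⁽ⁿ⁾(u)/λ⁽ⁿ⁾(v))²`,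
as an extended nonnegative real. -/
noncomputable def alphaFun {V : Type*} (T : RootlessTree V) (wt : V → ℝ) (v : V) : ℝ≥0∞ :=
  ∑' n : ℕ, ∑' u : (Aset T v n), ENNReal.ofReal ((lamN T wt n u / lamN T wt n v) ^ 2)

namespace Stmt16Aux

open scoped Classical

variable {V : Type*} (T : RootlessTree V) (wt : V → ℝ) (v : ℤ → V)

lemma iter_mono {a b : V} {n : ℕ} (h : T.par^[n] a = T.par^[n] b) (k : ℕ) :
    T.par^[n + k] a = T.par^[n + k] b := by
  induction k with
  | zero => simpa using h
  | succ k ih =>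
      rw [show n + (k + 1) = (n + k) + 1 by ring, Function.iterate_succ_apply',
        Function.iterate_succ_apply', ih]

variable (hpath : ∀ m : ℤ, T.par (v m) = v (m - 1))

include hpath in
lemma par_iter_path (n : ℕ) (m : ℤ) : T.par^[n] (v m) = v (m - n) := by
  induction n with
  | zero => simp
  | succ n ih =>
      rw [Function.iterate_succ_apply', ih, hpath]
      congr 1
      push_cast
      ring

include hpath in
lemma v_inj : Function.Injective v := by
  have key : ∀ a b : ℤ, a < b → v a = v b → False := by
    intro a b hlt heq
    have hn : 0 < (b - a).toNat := by omega
    apply T.acyclic (v b) (b - a).toNat hn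
    rw [par_iter_path T v hpath]
    rw [show (b : ℤ) - ((b - a).toNat : ℤ) = a by omega, heq]
  intro a b hab
  by_contra hne
  rcases lt_trichotomy a b with h | h | h
  · exact key a b h hab
  · exact hne h
  · exact key b a h hab.symm

/-- `Rel m u` : `u` is on the same level as `v m`. -/
def Rel (m : ℤ) (u : V) : Prop := ∃ n : ℕ, T.par^[n] u = T.par^[n] (v m)

include hpath in
lemma rel_unique {m m' : ℤ} {u : V} (h : Rel T v m u) (h' : Rel T v m' u) : m = m' := by
  obtain ⟨n, hn⟩ := h
  obtain ⟨p, hp⟩ := h'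
  have h1 : T.par^[n + p] u = T.par^[n + p] (v m) := iter_mono T hn p
  have h2 : T.par^[n + p] u = T.par^[n + p] (v m') := by
    rw [add_comm]; exact iter_mono T hp n
  rw [h1, par_iter_path T v hpath, par_iter_path T v hpath] at h2
  have := v_inj T v hpath h2
  omega

include hpath in
lemma rel_exists (u : V) : ∃ m : ℤ, Rel T v m u := by
  obtain ⟨k, l, hkl⟩ := T.connected u (v 0)
  refine ⟨(k : ℤ) - l, k, ?_⟩
  rw [par_iter_path T v hpath] at hkl ⊢
  rw [hkl]
  congr 1
  ring


variable (hwt : ∀ u : V, 0 < wt u)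

include hwt in
lemma lamN_pos (n : ℕ) (u : V) : 0 < lamN T wt n u :=
  Finset.prod_pos fun _ _ => hwt _

lemma lamN_succ (n : ℕ) (u : V) :
    lamN T wt (n + 1) u = lamN T wt n u * wt (T.par^[n] u) :=
  Finset.prod_range_succ _ _

lemma lamN_succ' (n : ℕ) (u : V) :
    lamN T wt (n + 1) u = wt u * lamN T wt n (T.par u) := by
  rw [lamN, Finset.prod_range_succ']
  simp only [Function.iterate_succ_apply, Function.iterate_zero_apply]
  rw [mul_comm]
  rfl

/-- the coefficient pattern of `g m`. -/
noncomputable def G (m : ℤ) (u : V) : ℝ :=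
  if h : Rel T v m u then lamN T wt (Nat.find h) u / lamN T wt (Nat.find h) (v m) else 0

include hwt in
lemma G_eq {m : ℤ} {u : V} {n : ℕ} (h : T.par^[n] u = T.par^[n] (v m)) :
    G T wt v m u = lamN T wt n u / lamN T wt n (v m) := by
  have hrel : Rel T v m u := ⟨n, h⟩
  rw [G, dif_pos hrel]
  have step : ∀ k : ℕ, T.par^[k] u = T.par^[k] (v m) →
      lamN T wt (k + 1) u / lamN T wt (k + 1) (v m)
        = lamN T wt k u / lamN T wt k (v m) := by
    intro k hk
    rw [lamN_succ, lamN_succ, hk, mul_div_mul_right _ _ (hwt _).ne']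
  have claim : ∀ j : ℕ,
      lamN T wt (Nat.find hrel + j) u / lamN T wt (Nat.find hrel + j) (v m)
        = lamN T wt (Nat.find hrel) u / lamN T wt (Nat.find hrel) (v m) := by
    intro j
    induction j with
    | zero => rfl
    | succ j ih =>
        rw [show Nat.find hrel + (j + 1) = (Nat.find hrel + j) + 1 from rfl,
          step _ (iter_mono T (Nat.find_spec hrel) j), ih]
  have hle : Nat.find hrel ≤ n := Nat.find_min' hrel h
  have := claim (n - Nat.find hrel)
  rw [Nat.add_sub_cancel' hle] at this
  exact this.symm

lemma G_zero {m : ℤ} {u : V} (h : ¬ Rel T v m u) : G T wt v m u = 0 := dif_neg h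

include hwt in
lemma G_self (m : ℤ) : G T wt v m (v m) = 1 := by
  rw [G_eq T wt v hwt (n := 0) rfl]
  exact div_self (lamN_pos T wt hwt 0 _).ne'

lemma mem_aset_iff {w u : V} {n : ℕ} :
    u ∈ Aset T w n ↔
      T.par^[n] u = T.par^[n] w ∧ ∀ k < n, T.par^[k] u ≠ T.par^[k] w := by
  cases n with
  | zero => simp [Aset]
  | succ n =>
      simp only [Aset, Set.mem_setOf_eq]
      constructor
      · rintro ⟨h1, h2⟩
        refine ⟨h1, fun k hk hkeq => h2 ?_⟩
        have := iter_mono T hkeq (n - k)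
        rwa [Nat.add_sub_cancel' (by omega : k ≤ n)] at this
      · rintro ⟨h1, h2⟩
        exact ⟨h1, h2 n (by omega)⟩

noncomputable def levelEquiv (m : ℤ) :
    (Σ n : ℕ, (Aset T (v m) n : Set V)) ≃ {u : V // Rel T v m u} := by
  refine Equiv.ofBijective
    (fun p => ⟨p.2.1, ⟨p.1, ((mem_aset_iff T).1 p.2.2).1⟩⟩) ⟨?_, ?_⟩
  · rintro ⟨n, u, hu⟩ ⟨n', u', hu'⟩ h
    have huu : u = u' := congrArg Subtype.val h
    subst huu
    have hn : n = n' := by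
      rcases (mem_aset_iff T).1 hu with ⟨e1, m1⟩
      rcases (mem_aset_iff T).1 hu' with ⟨e2, m2⟩
      by_contra hne
      rcases lt_or_gt_of_ne hne with hlt | hlt
      · exact m2 n hlt e1
      · exact m1 n' hlt e2
    subst hn
    rfl
  · rintro ⟨u, hu⟩
    exact ⟨⟨Nat.find hu, u, (mem_aset_iff T).2
      ⟨Nat.find_spec hu, fun k hk => Nat.find_min hu hk⟩⟩, Subtype.ext rfl⟩

@[simp] lemma levelEquiv_apply_val (m : ℤ) (p : Σ n : ℕ, (Aset T (v m) n : Set V)) :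
    (levelEquiv T v m p : V) = p.2.1 := rfl

include hwt in
lemma alpha_eq (m : ℤ) :
    alphaFun T wt (v m) = ∑' u : V, ENNReal.ofReal ((G T wt v m u) ^ 2) := by
  classical
  set F : V → ℝ≥0∞ := fun u => ENNReal.ofReal ((G T wt v m u) ^ 2) with hF
  have h1 : alphaFun T wt (v m) = ∑' n : ℕ, ∑' u : (Aset T (v m) n), F u.1 := by
    rw [alphaFun]
    refine tsum_congr fun n => tsum_congr fun u => ?_
    rw [hF]
    congr 2
    exact (G_eq T wt v hwt ((mem_aset_iff T).1 u.2).1).symm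
  rw [h1, ← ENNReal.tsum_sigma (fun n (u : (Aset T (v m) n : Set V)) => F u.1)]
  have h2 : (∑' p : Σ n : ℕ, (Aset T (v m) n : Set V), F p.2.1)
      = ∑' u : {u : V // Rel T v m u}, F u.1 := by
    rw [← (levelEquiv T v m).tsum_eq fun u => F u.1]
    exact tsum_congr fun p => by rw [levelEquiv_apply_val]
  rw [h2]
  exact tsum_subtype_eq_of_support_subset fun u hu => by
    by_contra hrel
    exact hu (by simp [hF, G_zero T wt v hrel])

include hwt in
lemma memG {m : ℤ} (h : alphaFun T wt (v m) < ⊤) :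
    Memℓp (fun u : V => ((G T wt v m u : ℝ) : ℂ)) 2 := by
  rw [alpha_eq T wt v hwt] at h
  apply memℓp_gen
  have hs : Summable fun u : V => (ENNReal.ofReal ((G T wt v m u) ^ 2)).toReal :=
    ENNReal.summable_toReal h.ne
  simp only [ENNReal.toReal_ofReal (sq_nonneg _)] at hs
  refine hs.congr fun u => ?_
  rw [show ((2 : ℝ≥0∞)).toReal = (2 : ℝ) by norm_num, Complex.norm_real,
    show (2 : ℝ) = ((2 : ℕ) : ℝ) by norm_num, Real.rpow_natCast,
    Real.norm_eq_abs, sq_abs]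

/-- the vector `g m`. -/
noncomputable def gdef (hwt : ∀ u : V, 0 < wt u) (m : ℤ) : lp (fun _ : V => ℂ) 2 :=
  if h : alphaFun T wt (v m) < ⊤ then
    ⟨fun u => ((G T wt v m u : ℝ) : ℂ), memG T wt v hwt h⟩ else 0

lemma gdef_apply (m : ℤ) (u : V) :
    (gdef T wt v hwt m) u
      = if alphaFun T wt (v m) < ⊤ then ((G T wt v m u : ℝ) : ℂ) else 0 := by
  rw [gdef]
  split
  · rfl
  · exact congrFun (lp.coeFn_zero (fun _ : V => ℂ) 2) u

lemma gdef_supp {m : ℤ} {u : V} (h : ¬ Rel T v m u) : (gdef T wt v hwt m) u = 0 := by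
  rw [gdef_apply]
  split
  · rw [G_zero T wt v h, Complex.ofReal_zero]
  · rfl

include hwt hpath in
lemma key_id (m : ℤ) (u : V) :
    wt u * G T wt v m (T.par u) = wt (v (m + 1)) * G T wt v (m + 1) u := by
  by_cases hrel : Rel T v (m + 1) u
  · obtain ⟨n, hn⟩ := hrel
    have hn1 : T.par^[n + 1] u = T.par^[n + 1] (v (m + 1)) := iter_mono T hn 1
    have hpar : T.par^[n] (T.par u) = T.par^[n] (v m) :=
      calc T.par^[n] (T.par u) = T.par^[n + 1] u :=
            (Function.iterate_succ_apply _ _ _).symm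
        _ = T.par^[n + 1] (v (m + 1)) := hn1
        _ = T.par^[n] (T.par (v (m + 1))) := Function.iterate_succ_apply _ _ _
        _ = T.par^[n] (v m) := by rw [hpath, show m + 1 - 1 = m by ring]
    rw [G_eq T wt v hwt hpar, G_eq T wt v hwt hn1, lamN_succ' T wt n u,
      lamN_succ' T wt n (v (m + 1)), hpath, show m + 1 - 1 = m by ring]
    have h1 : lamN T wt n (v m) ≠ 0 := (lamN_pos T wt hwt _ _).ne'
    have h2 : wt (v (m + 1)) ≠ 0 := (hwt _).ne'
    field_simp
  · have hrel' : ¬ Rel T v m (T.par u) := by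
      rintro ⟨n, hn⟩
      refine hrel ⟨n + 1, ?_⟩
      calc T.par^[n + 1] u = T.par^[n] (T.par u) := Function.iterate_succ_apply _ _ _
        _ = T.par^[n] (v m) := hn
        _ = T.par^[n] (T.par (v (m + 1))) := by rw [hpath, show m + 1 - 1 = m by ring]
        _ = T.par^[n + 1] (v (m + 1)) := (Function.iterate_succ_apply _ _ _).symm
    rw [G_zero T wt v hrel, G_zero T wt v hrel', mul_zero, mul_zero]

variable (S : lp (fun _ : V => ℂ) 2 →L[ℂ] lp (fun _ : V => ℂ) 2)
variable (hS : ∀ (f : lp (fun _ : V => ℂ) 2) (u : V), (S f) u = (wt u : ℂ) * f (T.par u))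

include hS in
lemma Cu_eq (u : V) :
    ∑' w : {w : V // T.par w = u}, ENNReal.ofReal ((wt w.1) ^ 2)
      = ENNReal.ofReal (‖S (lp.single 2 u (1 : ℂ))‖ ^ 2) := by
  set e := lp.single (E := fun _ : V => ℂ) 2 u (1 : ℂ) with he
  have hco : ∀ w : V, (S e) w = if T.par w = u then (wt w : ℂ) else 0 := by
    intro w
    rw [hS]
    by_cases h : T.par w = u
    · rw [if_pos h, he, h, lp.single_apply_self, mul_one]
    · rw [if_neg h, he, lp.single_apply_ne 2 u _ h, mul_zero]
  have hsm : Summable fun w : V => ‖(S e) w‖ ^ (2 : ℝ≥0∞).toReal :=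
    (lp.memℓp (S e)).summable (by norm_num)
  have hpt : ∀ w : V, ENNReal.ofReal (‖(S e) w‖ ^ (2 : ℝ≥0∞).toReal)
      = if T.par w = u then ENNReal.ofReal ((wt w) ^ 2) else 0 := by
    intro w
    rw [hco w]
    by_cases h : T.par w = u
    · rw [if_pos h, if_pos h, show ((2 : ℝ≥0∞)).toReal = ((2 : ℕ) : ℝ) by norm_num,
        Real.rpow_natCast, Complex.norm_real, Real.norm_eq_abs, sq_abs]
    · rw [if_neg h, if_neg h, norm_zero,
        Real.zero_rpow (by norm_num : (2 : ℝ≥0∞).toReal ≠ 0), ENNReal.ofReal_zero]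
  have hnorm : ‖S e‖ ^ (2 : ℝ≥0∞).toReal = ∑' w : V, ‖(S e) w‖ ^ (2 : ℝ≥0∞).toReal :=
    lp.norm_rpow_eq_tsum (by norm_num) (S e)
  have h1 : ENNReal.ofReal (‖S e‖ ^ 2)
      = ∑' w : V, (if T.par w = u then ENNReal.ofReal ((wt w) ^ 2) else 0) := by
    rw [show (‖S e‖ ^ 2) = ‖S e‖ ^ (2 : ℝ≥0∞).toReal by
        rw [show ((2 : ℝ≥0∞)).toReal = ((2 : ℕ) : ℝ) by norm_num, Real.rpow_natCast],
      hnorm, ENNReal.ofReal_tsum_of_nonneg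
        (fun w => Real.rpow_nonneg (norm_nonneg _) _) hsm]
    exact tsum_congr hpt
  rw [h1]
  have h2 := tsum_subtype_eq_of_support_subset
    (f := fun w : V => if T.par w = u then ENNReal.ofReal ((wt w) ^ 2) else 0)
    (s := {w : V | T.par w = u})
    (fun w hw => by
      by_contra h
      exact hw (if_neg h))
  rw [← h2]
  exact tsum_congr fun w => (if_pos w.2).symm

lemma norm_single_one (u : V) : ‖lp.single (E := fun _ : V => ℂ) 2 u (1 : ℂ)‖ = 1 := by
  have := lp.norm_single (E := fun _ : V => ℂ) (p := 2) (by norm_num)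
    u (1 : ℂ)
  simpa using this

include hS in
lemma Cu_le (u : V) :
    ∑' w : {w : V // T.par w = u}, ENNReal.ofReal ((wt w.1) ^ 2)
      ≤ ENNReal.ofReal (‖S‖ ^ 2) := by
  rw [Cu_eq T wt S hS u]
  apply ENNReal.ofReal_le_ofReal
  have h1 := S.le_opNorm (lp.single 2 u (1 : ℂ))
  rw [norm_single_one, mul_one] at h1
  exact pow_le_pow_left₀ (norm_nonneg _) h1 2

include hS in
lemma Cu_ge {c : ℝ} (hc : 0 < c)
    (hcS : ∀ f : lp (fun _ : V => ℂ) 2, c * ‖f‖ ≤ ‖S f‖) (u : V) :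
    ENNReal.ofReal (c ^ 2)
      ≤ ∑' w : {w : V // T.par w = u}, ENNReal.ofReal ((wt w.1) ^ 2) := by
  rw [Cu_eq T wt S hS u]
  apply ENNReal.ofReal_le_ofReal
  have h1 := hcS (lp.single 2 u (1 : ℂ))
  rw [norm_single_one, mul_one] at h1
  exact pow_le_pow_left₀ hc.le h1 2

include hwt hpath hS in
lemma alpha_sandwich (m : ℤ) {c : ℝ} (hc : 0 < c)
    (hcS : ∀ f : lp (fun _ : V => ℂ) 2, c * ‖f‖ ≤ ‖S f‖) :
    ENNReal.ofReal (c ^ 2) * alphaFun T wt (v m)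
        ≤ ENNReal.ofReal (wt (v (m + 1)) ^ 2) * alphaFun T wt (v (m + 1))
    ∧ ENNReal.ofReal (wt (v (m + 1)) ^ 2) * alphaFun T wt (v (m + 1))
        ≤ ENNReal.ofReal (‖S‖ ^ 2) * alphaFun T wt (v m) := by
  have hmid : ENNReal.ofReal (wt (v (m + 1)) ^ 2) * alphaFun T wt (v (m + 1))
      = ∑' u : V, (∑' w : {w : V // T.par w = u}, ENNReal.ofReal ((wt w.1) ^ 2))
          * ENNReal.ofReal ((G T wt v m u) ^ 2) := by
    rw [alpha_eq T wt v hwt (m + 1), ← ENNReal.tsum_mul_left]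
    have step1 : ∀ u : V,
        ENNReal.ofReal (wt (v (m + 1)) ^ 2) * ENNReal.ofReal ((G T wt v (m + 1) u) ^ 2)
          = ENNReal.ofReal ((wt u) ^ 2) * ENNReal.ofReal ((G T wt v m (T.par u)) ^ 2) := by
      intro u
      rw [← ENNReal.ofReal_mul (sq_nonneg _), ← ENNReal.ofReal_mul (sq_nonneg _),
        ← mul_pow, ← mul_pow, ← key_id T wt v hpath hwt m u]
    rw [tsum_congr step1,
      ← (Equiv.sigmaFiberEquiv T.par).tsum_eq
        (fun w : V => ENNReal.ofReal ((wt w) ^ 2)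
          * ENNReal.ofReal ((G T wt v m (T.par w)) ^ 2)),
      ENNReal.tsum_sigma']
    refine tsum_congr fun u => ?_
    rw [← ENNReal.tsum_mul_right]
    refine tsum_congr fun w => ?_
    simp only [Equiv.sigmaFiberEquiv, Equiv.coe_fn_mk]
    rw [w.2]
  constructor
  · rw [hmid, alpha_eq T wt v hwt m, ← ENNReal.tsum_mul_left]
    exact ENNReal.tsum_le_tsum fun u =>
      mul_le_mul_left (Cu_ge T wt S hS hc hcS u) _
  · rw [hmid, alpha_eq T wt v hwt m, ← ENNReal.tsum_mul_left]
    exact ENNReal.tsum_le_tsum fun u =>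
      mul_le_mul_left (Cu_le T wt S hS u) _

include hwt hpath hS in
lemma alpha_top_iff (m : ℤ) {c : ℝ} (hc : 0 < c)
    (hcS : ∀ f : lp (fun _ : V => ℂ) 2, c * ‖f‖ ≤ ‖S f‖) :
    (alphaFun T wt (v m) < ⊤ ↔ alphaFun T wt (v (m + 1)) < ⊤) := by
  obtain ⟨h1, h2⟩ := alpha_sandwich T wt v hpath hwt S hS m hc hcS
  constructor
  · intro h
    by_contra hta
    rw [not_lt, top_le_iff] at hta
    rw [hta, ENNReal.mul_top
      (ENNReal.ofReal_pos.mpr (pow_pos (hwt (v (m + 1))) 2)).ne'] at h2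
    exact absurd (lt_of_le_of_lt h2 (ENNReal.mul_lt_top ENNReal.ofReal_lt_top h))
      (lt_irrefl ⊤)
  · intro h
    by_contra hta
    rw [not_lt, top_le_iff] at hta
    rw [hta, ENNReal.mul_top
      (ENNReal.ofReal_pos.mpr (pow_pos hc 2)).ne'] at h1
    exact absurd (lt_of_le_of_lt h1 (ENNReal.mul_lt_top ENNReal.ofReal_lt_top h))
      (lt_irrefl ⊤)

include hwt hpath hS in
lemma intertwine (m : ℤ) {c : ℝ} (hc : 0 < c)
    (hcS : ∀ f : lp (fun _ : V => ℂ) 2, c * ‖f‖ ≤ ‖S f‖) :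
    S (gdef T wt v hwt m) = ((wt (v (m + 1)) : ℝ) : ℂ) • gdef T wt v hwt (m + 1) := by
  apply lp.ext
  funext u
  have hsm : (((wt (v (m + 1)) : ℝ) : ℂ) • gdef T wt v hwt (m + 1)) u
      = ((wt (v (m + 1)) : ℝ) : ℂ) * (gdef T wt v hwt (m + 1)) u := by
    rw [lp.coeFn_smul]; rfl
  rw [hS, hsm, gdef_apply, gdef_apply]
  by_cases h : alphaFun T wt (v m) < ⊤
  · rw [if_pos h, if_pos ((alpha_top_iff T wt v hpath hwt S hS m hc hcS).1 h)]
    have := key_id T wt v hpath hwt m u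
    push_cast
    exact_mod_cast congrArg (fun r : ℝ => (r : ℂ)) this
  · rw [if_neg h,
      if_neg (fun h' => h ((alpha_top_iff T wt v hpath hwt S hS m hc hcS).2 h')),
      mul_zero, mul_zero]

include hS in
lemma pow_apply (n : ℕ) (f : lp (fun _ : V => ℂ) 2) (x : V) :
    ((S ^ n) f) x = ((lamN T wt n x : ℝ) : ℂ) * f (T.par^[n] x) := by
  induction n generalizing f with
  | zero => simp [lamN]
  | succ n ih =>
      rw [pow_succ, ContinuousLinearMap.mul_apply, ih (S f), hS,
        lamN_succ T wt n x,
        show T.par (T.par^[n] x) = T.par^[n + 1] x from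
          (Function.iterate_succ_apply' T.par n x).symm]
      push_cast
      ring

include hwt hS in
lemma hyper_coord (f : lp (fun _ : V => ℂ) 2)
    (hf : ∀ n : ℕ, ∃ h, (S ^ n) h = f) {m : ℤ} {u : V} (hrel : Rel T v m u) :
    (f : V → ℂ) u = f (v m) * ((G T wt v m u : ℝ) : ℂ) := by
  obtain ⟨n, hn⟩ := hrel
  obtain ⟨h, hh⟩ := hf n
  have h1 : (f : V → ℂ) u = ((lamN T wt n u : ℝ) : ℂ) * h (T.par^[n] u) := by
    rw [← hh, pow_apply T wt S hS]
  have h2 : (f : V → ℂ) (v m)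
      = ((lamN T wt n (v m) : ℝ) : ℂ) * h (T.par^[n] (v m)) := by
    rw [← hh, pow_apply T wt S hS]
  rw [G_eq T wt v hwt hn, h1, h2, hn, Complex.ofReal_div]
  have hb : ((lamN T wt n (v m) : ℝ) : ℂ) ≠ 0 :=
    Complex.ofReal_ne_zero.mpr (lamN_pos T wt hwt n (v m)).ne'
  field_simp

lemma lp_tsum_sq_lt_top (f : lp (fun _ : V => ℂ) 2) :
    ∑' u : V, ENNReal.ofReal (‖(f : V → ℂ) u‖ ^ 2) < ⊤ := by
  have hsm : Summable fun u : V => ‖(f : V → ℂ) u‖ ^ (2 : ℝ≥0∞).toReal :=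
    (lp.memℓp f).summable (by norm_num)
  have hsm2 : Summable fun u : V => ‖(f : V → ℂ) u‖ ^ (2 : ℕ) :=
    hsm.congr fun u => by
      rw [show ((2 : ℝ≥0∞)).toReal = ((2 : ℕ) : ℝ) by norm_num, Real.rpow_natCast]
  rw [show (fun u : V => ENNReal.ofReal (‖(f : V → ℂ) u‖ ^ 2))
      = fun u : V => ENNReal.ofReal (‖(f : V → ℂ) u‖ ^ (2 : ℕ)) by norm_num,
    ← ENNReal.ofReal_tsum_of_nonneg (fun u => pow_nonneg (norm_nonneg _) _) hsm2]
  exact ENNReal.ofReal_lt_top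

include hwt hS in
lemma hyper_vm_zero (f : lp (fun _ : V => ℂ) 2)
    (hf : ∀ n : ℕ, ∃ h, (S ^ n) h = f) (m : ℤ)
    (halpha : ¬ alphaFun T wt (v m) < ⊤) : (f : V → ℂ) (v m) = 0 := by
  by_contra hfm
  apply halpha
  rw [alpha_eq T wt v hwt m]
  set K : ℝ := ‖(f : V → ℂ) (v m)‖ with hK
  have hKpos : 0 < K := norm_pos_iff.mpr hfm
  have hpt : ∀ u : V, ENNReal.ofReal ((G T wt v m u) ^ 2)
      ≤ ENNReal.ofReal (‖(f : V → ℂ) u‖ ^ 2) / ENNReal.ofReal (K ^ 2) := by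
    intro u
    by_cases hrel : Rel T v m u
    · have hc := hyper_coord T wt v hwt S hS f hf hrel
      have hnorm : ‖(f : V → ℂ) u‖ = K * |G T wt v m u| := by
        rw [hc, norm_mul, Complex.norm_real, Real.norm_eq_abs, hK]
      have hGeq : (G T wt v m u) ^ 2 = ‖(f : V → ℂ) u‖ ^ 2 / K ^ 2 := by
        rw [hnorm, mul_pow, sq_abs]
        field_simp
      rw [hGeq, ENNReal.ofReal_div_of_pos (pow_pos hKpos 2)]
    · rw [G_zero T wt v hrel]
      simp
  calc ∑' u : V, ENNReal.ofReal ((G T wt v m u) ^ 2)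
      ≤ ∑' u : V, ENNReal.ofReal (‖(f : V → ℂ) u‖ ^ 2) / ENNReal.ofReal (K ^ 2) :=
        ENNReal.tsum_le_tsum hpt
    _ = (∑' u : V, ENNReal.ofReal (‖(f : V → ℂ) u‖ ^ 2)) / ENNReal.ofReal (K ^ 2) := by
        simp only [div_eq_mul_inv]
        exact ENNReal.tsum_mul_right
    _ < ⊤ := ENNReal.div_lt_top (lp_tsum_sq_lt_top f).ne
        (ENNReal.ofReal_pos.mpr (pow_pos hKpos 2)).ne'

include hwt hpath hS in
lemma g_mem_range (n : ℕ) (m : ℤ) {c : ℝ} (hc : 0 < c)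
    (hcS : ∀ f : lp (fun _ : V => ℂ) 2, c * ‖f‖ ≤ ‖S f‖) :
    ∃ x, (S ^ n) x = gdef T wt v hwt m := by
  induction n generalizing m with
  | zero => exact ⟨gdef T wt v hwt m, by rw [pow_zero]; rfl⟩
  | succ n ih =>
      obtain ⟨x, hx⟩ := ih (m - 1)
      have hw : ((wt (v m) : ℝ) : ℂ) ≠ 0 := Complex.ofReal_ne_zero.mpr (hwt _).ne'
      refine ⟨(((wt (v m) : ℝ) : ℂ))⁻¹ • x, ?_⟩
      rw [pow_succ', ContinuousLinearMap.mul_apply, map_smul, hx, map_smul,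
        intertwine T wt v hpath hwt S hS (m - 1) hc hcS,
        show m - 1 + 1 = m by ring, smul_smul, inv_mul_cancel₀ hw, one_smul]

lemma pow_low {c : ℝ} (hc : 0 < c)
    (hcS : ∀ f : lp (fun _ : V => ℂ) 2, c * ‖f‖ ≤ ‖S f‖) (n : ℕ)
    (x : lp (fun _ : V => ℂ) 2) : c ^ n * ‖x‖ ≤ ‖(S ^ n) x‖ := by
  induction n generalizing x with
  | zero => simp
  | succ n ih =>
      calc c ^ (n + 1) * ‖x‖ = c ^ n * (c * ‖x‖) := by ring
        _ ≤ c ^ n * ‖S x‖ :=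
            mul_le_mul_of_nonneg_left (hcS x) (pow_nonneg hc.le n)
        _ ≤ ‖(S ^ n) (S x)‖ := ih (S x)
        _ = ‖(S ^ (n + 1)) x‖ := by rw [pow_succ, ContinuousLinearMap.mul_apply]

lemma range_closed {c : ℝ} (hc : 0 < c)
    (hcS : ∀ f : lp (fun _ : V => ℂ) 2, c * ‖f‖ ≤ ‖S f‖) (n : ℕ) :
    IsClosed (Set.range ⇑(S ^ n)) := by
  have hanti : AntilipschitzWith (Real.toNNReal ((c ^ n)⁻¹)) ⇑(S ^ n) := by
    apply ContinuousLinearMap.antilipschitz_of_bound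
    intro x
    rw [Real.coe_toNNReal _ (by positivity)]
    calc ‖x‖ = (c ^ n)⁻¹ * (c ^ n * ‖x‖) := by field_simp
      _ ≤ (c ^ n)⁻¹ * ‖(S ^ n) x‖ :=
          mul_le_mul_of_nonneg_left (pow_low S hc hcS n x) (by positivity)
  exact hanti.isClosed_range (S ^ n).uniformContinuous

include hwt hpath in
lemma g_orth (m m' : ℤ) (h : m ≠ m') :
    (inner ℂ (gdef T wt v hwt m) (gdef T wt v hwt m') : ℂ) = 0 := by
  rw [lp.inner_eq_tsum]
  have hz : ∀ u : V,
      (inner ℂ ((gdef T wt v hwt m) u) ((gdef T wt v hwt m') u) : ℂ) = 0 := by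
    intro u
    by_cases hrel : Rel T v m u
    · have hrel' : ¬ Rel T v m' u := fun hr => h (rel_unique T v hpath hrel hr)
      rw [gdef_supp T wt v hwt hrel', inner_zero_right]
    · rw [gdef_supp T wt v hwt hrel, inner_zero_left]
  rw [tsum_congr hz, tsum_zero]

set_option maxHeartbeats 1000000 in
include hwt hpath hS in
lemma hyper_sub_closure (f : lp (fun _ : V => ℂ) 2)
    (hf : ∀ n : ℕ, ∃ h, (S ^ n) h = f) :
    f ∈ closure (Submodule.span ℂ (Set.range (gdef T wt v hwt))
      : Set (lp (fun _ : V => ℂ) 2)) := by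
  classical
  have hex : ∀ u : V, ∃ m : ℤ, Rel T v m u := rel_exists T v hpath
  let lev : V → ℤ := fun u => (hex u).choose
  have hlev_spec : ∀ u : V, Rel T v (lev u) u := fun u => (hex u).choose_spec
  have hlev_eq : ∀ (m : ℤ) (u : V), Rel T v m u → lev u = m :=
    fun m u h => rel_unique T v hpath (hlev_spec u) h
  have hcoord : ∀ u : V,
      (f : V → ℂ) u = (f : V → ℂ) (v (lev u)) * (gdef T wt v hwt (lev u)) u := by
    intro u
    by_cases h : alphaFun T wt (v (lev u)) < ⊤
    · rw [gdef_apply, if_pos h]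
      exact hyper_coord T wt v hwt S hS f hf (hlev_spec u)
    · have h0 : (f : V → ℂ) (v (lev u)) = 0 :=
        hyper_vm_zero T wt v hwt S hS f hf _ h
      rw [h0, zero_mul, hyper_coord T wt v hwt S hS f hf (hlev_spec u), h0,
        zero_mul]
  set K : Submodule ℂ (lp (fun _ : V => ℂ) 2) :=
    Submodule.span ℂ (Set.range (gdef T wt v hwt)) with hKdef
  have hKc : f ∈ Kᗮᗮ := by
    rw [Submodule.mem_orthogonal]
    intro y hy
    have hyg : ∀ m : ℤ, (inner ℂ y (gdef T wt v hwt m) : ℂ) = 0 := by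
      intro m
      have h1 : (inner ℂ (gdef T wt v hwt m) y : ℂ) = 0 :=
        (Submodule.mem_orthogonal K y).1 hy _
          (Submodule.subset_span (Set.mem_range_self m))
      rw [← inner_conj_symm, h1, map_zero]
    rw [lp.inner_eq_tsum]
    have hsum : Summable fun u : V =>
        (inner ℂ ((y : V → ℂ) u) ((f : V → ℂ) u) : ℂ) := lp.summable_inner y f
    have hEsum : Summable fun p : Σ m : ℤ, {u : V // lev u = m} =>
        (inner ℂ ((y : V → ℂ) ((Equiv.sigmaFiberEquiv lev) p))
          ((f : V → ℂ) ((Equiv.sigmaFiberEquiv lev) p)) : ℂ) :=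
      (Equiv.summable_iff (Equiv.sigmaFiberEquiv lev)).2 hsum
    have h1 : ∑' u : V, (inner ℂ ((y : V → ℂ) u) ((f : V → ℂ) u) : ℂ)
        = ∑' p : Σ m : ℤ, {u : V // lev u = m},
            (inner ℂ ((y : V → ℂ) ((Equiv.sigmaFiberEquiv lev) p))
              ((f : V → ℂ) ((Equiv.sigmaFiberEquiv lev) p)) : ℂ) :=
      ((Equiv.sigmaFiberEquiv lev).tsum_eq _).symm
    rw [h1, Summable.tsum_sigma hEsum]
    have h2 : ∀ m : ℤ, ∑' u : {u : V // lev u = m},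
        (inner ℂ ((y : V → ℂ) ((Equiv.sigmaFiberEquiv lev) ⟨m, u⟩))
          ((f : V → ℂ) ((Equiv.sigmaFiberEquiv lev) ⟨m, u⟩)) : ℂ) = 0 := by
      intro m
      have hstep : ∀ u : {u : V // lev u = m},
          (inner ℂ ((y : V → ℂ) ((Equiv.sigmaFiberEquiv lev) ⟨m, u⟩))
            ((f : V → ℂ) ((Equiv.sigmaFiberEquiv lev) ⟨m, u⟩)) : ℂ)
          = (f : V → ℂ) (v m)
              * (inner ℂ ((y : V → ℂ) u.1) ((gdef T wt v hwt m) u.1) : ℂ) := by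
        intro u
        simp only [Equiv.sigmaFiberEquiv, Equiv.coe_fn_mk]
        rw [hcoord u.1, u.2, ← smul_eq_mul, inner_smul_right]
      rw [tsum_congr hstep, tsum_mul_left]
      have hsupp : ∑' u : {u : V // lev u = m},
          (inner ℂ ((y : V → ℂ) u.1) ((gdef T wt v hwt m) u.1) : ℂ)
          = ∑' u : V, (inner ℂ ((y : V → ℂ) u) ((gdef T wt v hwt m) u) : ℂ) := by
        refine tsum_subtype_eq_of_support_subset
          (f := fun u : V => (inner ℂ ((y : V → ℂ) u) ((gdef T wt v hwt m) u) : ℂ))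
          (s := {u : V | lev u = m}) fun u hu => ?_
        by_contra h
        have hnr : ¬ Rel T v m u := fun hr => h (hlev_eq m u hr)
        refine hu ?_
        show (inner ℂ ((y : V → ℂ) u) ((gdef T wt v hwt m) u) : ℂ) = 0
        rw [gdef_supp T wt v hwt hnr, inner_zero_right]
      rw [hsupp, ← lp.inner_eq_tsum, hyg m, mul_zero]
    rw [tsum_congr h2, tsum_zero]
  rw [Submodule.orthogonal_orthogonal_eq_closure] at hKc
  rw [← Submodule.topologicalClosure_coe]
  exact hKc

end Stmt16Aux

/-- Structure of the hyper-range of a left-invertible weighted shift on a rootless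
directed tree: the vectors `g_m` (supported on the generations of a bilateral path,
with coefficients `λ⁽ⁿ⁾(u)/λ⁽ⁿ⁾(v_m)` when `α_λ(v_m) < ∞`, and `g_m = 0` otherwise)
lie in `ℓ²(V)`, are pairwise orthogonal, span the hyper-range, and satisfy
`S_λ g_m = λ_{v_{m+1}} g_{m+1}`. -/
theorem stmt16 {V : Type*} [Countable V] [Infinite V] (T : RootlessTree V)
    (wt : V → ℝ) (hwt : ∀ u : V, 0 < wt u)
    (S : lp (fun _ : V => ℂ) 2 →L[ℂ] lp (fun _ : V => ℂ) 2)
    (hS : ∀ (f : lp (fun _ : V => ℂ) 2) (v : V), (S f) v = (wt v : ℂ) * f (T.par v))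
    (hleft : ∃ c : ℝ, 0 < c ∧ ∀ f : lp (fun _ : V => ℂ) 2, c * ‖f‖ ≤ ‖S f‖)
    (v : ℤ → V) (hpath : ∀ m : ℤ, T.par (v m) = v (m - 1)) :
    ∃ g : ℤ → lp (fun _ : V => ℂ) 2,
      (∀ (m : ℤ) (n : ℕ), ∀ u ∈ Aset T (v m) n,
        (g m) u = if alphaFun T wt (v m) < ⊤ then
          ((lamN T wt n u / lamN T wt n (v m) : ℝ) : ℂ) else 0) ∧
      (∀ (m : ℤ) (u : V), (∀ n : ℕ, T.par^[n] u ≠ T.par^[n] (v m)) → (g m) u = 0) ∧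
      ((⋂ n : ℕ, Set.range ⇑(S ^ n)) =
        closure (Submodule.span ℂ (Set.range g) : Set (lp (fun _ : V => ℂ) 2))) ∧
      (∀ m m' : ℤ, m ≠ m' → (inner ℂ (g m) (g m') : ℂ) = 0) ∧
      (∀ m : ℤ, S (g m) = (wt (v (m + 1)) : ℂ) • g (m + 1)) := by
  classical
  obtain ⟨c, hc, hcS⟩ := hleft
  refine ⟨Stmt16Aux.gdef T wt v hwt, ?_, ?_, ?_, ?_, ?_⟩
  · intro m n u hu
    rw [Stmt16Aux.gdef_apply]
    by_cases h : alphaFun T wt (v m) < ⊤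
    · rw [if_pos h, if_pos h,
        Stmt16Aux.G_eq T wt v hwt ((Stmt16Aux.mem_aset_iff T).1 hu).1]
    · rw [if_neg h, if_neg h]
  · intro m u hn
    exact Stmt16Aux.gdef_supp T wt v hwt (fun ⟨n, h⟩ => hn n h)
  · ext f
    simp only [Set.mem_iInter, Set.mem_range]
    constructor
    · intro hf
      exact Stmt16Aux.hyper_sub_closure T wt v hpath hwt S hS f hf
    · intro hf n
      have hclosed := Stmt16Aux.range_closed S hc hcS n
      have hsub : (Submodule.span ℂ (Set.range (Stmt16Aux.gdef T wt v hwt)))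
          ≤ LinearMap.range ((S ^ n : lp (fun _ : V => ℂ) 2 →L[ℂ] lp (fun _ : V => ℂ) 2) :
            lp (fun _ : V => ℂ) 2 →ₗ[ℂ] lp (fun _ : V => ℂ) 2) := by
        rw [Submodule.span_le]
        rintro x ⟨m, rfl⟩
        exact LinearMap.mem_range.2
          (Stmt16Aux.g_mem_range T wt v hpath hwt S hS n m hc hcS)
      have hsubset : closure
          ((Submodule.span ℂ (Set.range (Stmt16Aux.gdef T wt v hwt))) :
            Set (lp (fun _ : V => ℂ) 2)) ⊆ Set.range ⇑(S ^ n) := by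
        apply closure_minimal _ hclosed
        intro x hx
        have := hsub hx
        rwa [← SetLike.mem_coe, LinearMap.coe_range] at this
      exact hsubset hf
  · intro m m' hmm
    exact Stmt16Aux.g_orth T wt v hpath hwt m m' hmm
  · intro m
    exact Stmt16Aux.intertwine T wt v hpath hwt S hS m hc hcS
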